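/- Let n, d, m be positive integers, X ∈ ℝ^{n×d}, A : ℝ^n → ℝ^n a linear map, and e ∈ ℝ^n. For w ∈ ℝ^d let D(w) denote the diagonal 0/1 matrix with (D(w))_{kk} = 1 if (Xw)_k ≥ 0 and (D(w))_{kk} = 0 otherwise, and let 𝒫 := {D(w) : w ∈ ℝ^d} (a finite set). Then the optimal value of the nonconvex problem, inf over (w_j, α_j)_{j=1}^m ∈ (ℝ^d × ℝ)^m of ‖e − A(Σ_{j=1}^m α_j ReLU(X w_j))‖², is greater than or equal to the optimal value of the convex problem, inf over families (v_D, u_D)_{D ∈ 𝒫} of vectors in ℝ^d satisfying (2D − I) X v_D ≥ 0 and (2D − I) X u_D ≥ 0 componentwise for every D ∈ 𝒫, of ‖e − A(Σ_{D ∈ 𝒫} D X (v_D − u_D))‖². Here ReLU acts componentwise: (ReLU(z))_k = max(z_k, 0), and ‖·‖ is the Euclidean norm. -/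
import Mathlib

open Matrix

noncomputable def actD (n : ℕ) (b : Fin n → Bool) : Matrix (Fin n) (Fin n) ℝ :=
  Matrix.diagonal (fun k => if b k then 1 else 0)

lemma actD_mulVec {n : ℕ} (b : Fin n → Bool) (z : Fin n → ℝ) (k : Fin n) :
    (actD n b *ᵥ z) k = if b k then z k else 0 := by
  simp [actD, Matrix.mulVec_diagonal]

lemma twoD_mulVec {n : ℕ} (b : Fin n → Bool) (z : Fin n → ℝ) (k : Fin n) :
    ((((2 : ℝ) • actD n b) - 1) *ᵥ z) k = if b k then z k else -z k := by
  simp [Matrix.sub_mulVec, Matrix.smul_mulVec, Matrix.one_mulVec, actD,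
    Matrix.mulVec_diagonal, Pi.smul_apply, Pi.sub_apply]
  split <;> ring

lemma mulVec_sum' {n d : ℕ} (X : Matrix (Fin n) (Fin d) ℝ) {ι : Type*} (s : Finset ι)
    (f : ι → Fin d → ℝ) : X *ᵥ (∑ j ∈ s, f j) = ∑ j ∈ s, X *ᵥ f j := by
  have h := map_sum X.mulVecLin f s
  simpa only [Matrix.mulVecLin_apply] using h

lemma constr {n d m : ℕ} (X : Matrix (Fin n) (Fin d) ℝ) (b : Fin n → Bool)
    (s : Finset (Fin m)) (c : Fin m → ℝ) (w : Fin m → Fin d → ℝ)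
    (h : ∀ j ∈ s, 0 ≤ c j ∧ (fun k => decide (0 ≤ (X *ᵥ w j) k)) = b) (k : Fin n) :
    0 ≤ ((((2 : ℝ) • actD n b) - 1) *ᵥ (X *ᵥ ∑ j ∈ s, c j • w j)) k := by
  rw [twoD_mulVec, mulVec_sum' X s (fun j => c j • w j)]
  have hterm : ∀ j ∈ s, 0 ≤ (if b k then (X *ᵥ (c j • w j)) k else -((X *ᵥ (c j • w j)) k)) := by
    intro j hj
    obtain ⟨hc, hpj⟩ := h j hj
    have hz : (X *ᵥ (c j • w j)) k = c j * (X *ᵥ w j) k := by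
      rw [Matrix.mulVec_smul]; simp
    by_cases hbk : b k
    · have hle : 0 ≤ (X *ᵥ w j) k := by simpa [hbk] using congrFun hpj k
      rw [if_pos hbk, hz]
      positivity
    · have hneg : (X *ᵥ w j) k < 0 := by simpa [hbk] using congrFun hpj k
      rw [if_neg hbk, hz]
      nlinarith
  by_cases hbk : b k
  · rw [if_pos hbk, Finset.sum_apply]
    exact Finset.sum_nonneg fun j hj => by have := hterm j hj; rwa [if_pos hbk] at this
  · rw [if_neg hbk, neg_nonneg, Finset.sum_apply]
    exact Finset.sum_nonpos fun j hj => by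
      have := hterm j hj; rw [if_neg hbk] at this; linarith

theorem stmt_7 (n d m : ℕ) (hn : 0 < n) (hd : 0 < d) (hm : 0 < m)
    (X : Matrix (Fin n) (Fin d) ℝ)
    (A : (Fin n → ℝ) →ₗ[ℝ] (Fin n → ℝ))
    (e : Fin n → ℝ)
    (P : Finset (Fin n → Bool))
    (hP : ∀ b, b ∈ P ↔ ∃ w : Fin d → ℝ, b = fun k => decide (0 ≤ (X *ᵥ w) k)) :
    sInf { r : ℝ | ∃ v u : (Fin n → Bool) → (Fin d → ℝ),
        (∀ b ∈ P, (∀ k, 0 ≤ ((((2 : ℝ) • actD n b) - 1) *ᵥ (X *ᵥ v b)) k) ∧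
                  (∀ k, 0 ≤ ((((2 : ℝ) • actD n b) - 1) *ᵥ (X *ᵥ u b)) k)) ∧
        r = ∑ k, (e k - A (∑ b ∈ P, (actD n b) *ᵥ (X *ᵥ (v b - u b))) k) ^ 2 }
    ≤ sInf { r : ℝ | ∃ (w : Fin m → Fin d → ℝ) (α : Fin m → ℝ),
        r = ∑ k, (e k - A (∑ j, α j • (fun k' => max ((X *ᵥ w j) k') 0)) k) ^ 2 } := by
  apply csInf_le_csInf
  · refine ⟨0, ?_⟩
    rintro r ⟨v, u, -, rfl⟩
    positivity
  · exact ⟨_, 0, 0, rfl⟩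
  · rintro r ⟨w, α, rfl⟩
    set pat : Fin m → (Fin n → Bool) := fun j k => decide (0 ≤ (X *ᵥ w j) k) with hpat
    set v : (Fin n → Bool) → (Fin d → ℝ) :=
      fun b => ∑ j ∈ Finset.univ.filter (fun j => pat j = b ∧ 0 ≤ α j), α j • w j with hv
    set u : (Fin n → Bool) → (Fin d → ℝ) :=
      fun b => ∑ j ∈ Finset.univ.filter (fun j => pat j = b ∧ α j < 0), (-α j) • w j with hu
    refine ⟨v, u, ?_, ?_⟩
    · intro b hb
      constructor
      · intro k
        exact constr X b _ α w (fun j hj => by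
          simp only [Finset.mem_filter] at hj
          exact ⟨hj.2.2, hj.2.1⟩) k
      · intro k
        exact constr X b _ (fun j => -α j) w (fun j hj => by
          simp only [Finset.mem_filter] at hj
          exact ⟨show (0:ℝ) ≤ -α j by linarith [hj.2.2], hj.2.1⟩) k
    · -- equality of objective values
      have hvu : ∀ b, v b - u b = ∑ j ∈ Finset.univ.filter (fun j => pat j = b), α j • w j := by
        intro b
        have hsplit := Finset.sum_filter_add_sum_filter_not
          (Finset.univ.filter (fun j => pat j = b)) (fun j => 0 ≤ α j) (fun j => α j • w j)
        rw [Finset.filter_filter, Finset.filter_filter] at hsplit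
        have hnot : (Finset.univ.filter (fun j => pat j = b ∧ ¬ 0 ≤ α j))
            = (Finset.univ.filter (fun j => pat j = b ∧ α j < 0)) := by
          apply Finset.filter_congr
          intro j _
          simp [not_le]
        rw [hnot] at hsplit
        have hu' : u b = -∑ j ∈ Finset.univ.filter (fun j => pat j = b ∧ α j < 0), α j • w j := by
          rw [hu, ← Finset.sum_neg_distrib]
          exact Finset.sum_congr rfl fun j _ => by rw [neg_smul]
        rw [hv, hu', sub_neg_eq_add, hsplit]
      have hkey : (∑ b ∈ P, (actD n b) *ᵥ (X *ᵥ (v b - u b)))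
          = ∑ j, α j • (fun k' => max ((X *ᵥ w j) k') 0) := by
        have hmaps : ∀ j ∈ (Finset.univ : Finset (Fin m)), pat j ∈ P :=
          fun j _ => (hP (pat j)).2 ⟨w j, rfl⟩
        rw [← Finset.sum_fiberwise_of_maps_to hmaps (fun j => α j • (fun k' => max ((X *ᵥ w j) k') 0))]
        refine Finset.sum_congr rfl fun b hb => ?_
        rw [hvu b, mulVec_sum' X _ (fun j => α j • w j), mulVec_sum' (actD n b) _ (fun j => X *ᵥ (α j • w j))]
        refine Finset.sum_congr rfl fun j hj => ?_
        have hpj : pat j = b := (Finset.mem_filter.mp hj).2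
        funext k
        rw [actD_mulVec]
        have hz : (X *ᵥ (α j • w j)) k = α j * (X *ᵥ w j) k := by
          rw [Matrix.mulVec_smul]; simp
        have hbk : b k = decide (0 ≤ (X *ᵥ w j) k) := by rw [← hpj]
        by_cases hle : 0 ≤ (X *ᵥ w j) k
        · simp [hbk, hle, hz, max_eq_left hle]
        · simp [hbk, hle, hz, max_eq_right (le_of_not_ge hle)]
      rw [hkey]
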